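/- arXiv:math/9811170 — 3 statements merged into one kernel-verified Lean document; each statement's English description precedes it below -/
import Mathlib

section
/- Suppose (P, ω) is an insertion-tolerant bond percolation process on a connected locally finite graph G, and let A ⊆ 2^V × 2^E be measurable. Assume that with positive probability there co-exist infinite clusters of type A and infinite clusters of type ¬A. Then with positive probability there is an infinite cluster of the percolation that has a pivotal edge. -/
open MeasureTheory

open scoped ENNReal

section Preamble

variable {V : Type*}

/-- The spanning percolation subgraph of `G` determined by the configuration
`ω ⊆ Sym2 V` of open edges. -/
def percGraph (G : SimpleGraph V) (ω : Set (Sym2 V)) : SimpleGraph V where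
  Adj x y := G.Adj x y ∧ s(x, y) ∈ ω
  symm := ⟨fun x y ⟨h, hm⟩ => ⟨h.symm, by rwa [Sym2.eq_swap]⟩⟩
  loopless := ⟨fun x ⟨h, _⟩ => G.loopless.irrefl x h⟩

/-- The cluster (vertex set of the connected component) of `v` in the
configuration `ω`. -/
def cluster (G : SimpleGraph V) (ω : Set (Sym2 V)) (v : V) : Set V :=
  {u | (percGraph G ω).Reachable v u}

/-- `g` is an automorphism of the graph `G`. -/
def IsGraphAut (G : SimpleGraph V) (g : Equiv.Perm V) : Prop :=
  ∀ x y, G.Adj (g x) (g y) ↔ G.Adj x y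

/-- The action of a permutation of the vertices on bond configurations. -/
def edgeAct (g : Equiv.Perm V) (ω : Set (Sym2 V)) : Set (Sym2 V) :=
  Sym2.map g '' ω

/-- The action of a permutation of the vertices on vertex sets. -/
def vertAct (g : Equiv.Perm V) (C : Set V) : Set V := (g : V → V) '' C

/-- `G` is locally finite. -/
def LocFin (G : SimpleGraph V) : Prop := ∀ v, (G.neighborSet v).Finite

/-- A set of permutations acts transitively on the vertices. -/
def TransSubgroup (Γ : Subgroup (Equiv.Perm V)) : Prop :=
  ∀ x y : V, ∃ γ ∈ Γ, γ x = y

/-- Unimodularity of a transitive closed automorphism group of a connected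
locally finite graph, via the standard counting characterization
`|{z : ∃ γ ∈ Γ, γx = x, γy = z}| = |{z : ∃ γ ∈ Γ, γy = y, γx = z}|`. -/
def UnimodSubgroup (Γ : Subgroup (Equiv.Perm V)) : Prop :=
  ∀ x y : V,
    {z | ∃ γ ∈ Γ, γ x = x ∧ γ y = z}.ncard = {z | ∃ γ ∈ Γ, γ y = y ∧ γ x = z}.ncard

/-- The topology of pointwise convergence on the permutations of the
(discrete) vertex set. -/
def permTop (V : Type*) : TopologicalSpace (Equiv.Perm V) :=
  letI : TopologicalSpace V := ⊥
  TopologicalSpace.induced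
    (fun g : Equiv.Perm V => ((g : V → V), (g.symm : V → V))) inferInstance

/-- `Γ` is closed in the topology of pointwise convergence. -/
def ClosedSubgroup' (Γ : Subgroup (Equiv.Perm V)) : Prop :=
  @IsClosed _ (permTop V) (Γ : Set (Equiv.Perm V))

/-- `P` is a `Γ`-invariant bond percolation process (a probability measure on
`2^E`, invariant under each element of `Γ`). -/
def InvariantPerc (Γ : Subgroup (Equiv.Perm V)) (P : Measure (Set (Sym2 V))) : Prop :=
  IsProbabilityMeasure P ∧ ∀ γ ∈ Γ, Measure.map (edgeAct γ) P = P

/-- `P` is `Γ`-ergodic: every `Γ`-invariant event has probability `0` or `1`. -/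
def ErgodicPerc (Γ : Subgroup (Equiv.Perm V)) (P : Measure (Set (Sym2 V))) : Prop :=
  ∀ A : Set (Set (Sym2 V)), MeasurableSet A → (∀ γ ∈ Γ, edgeAct γ ⁻¹' A = A) →
    P A = 0 ∨ P A = 1

/-- `P` is Bernoulli(`p`) bond percolation on `G`: the product measure on the
subsets of the edge set giving each edge probability `p` independently.  (These
conditions characterize that product measure uniquely.) -/
def IsBernoulli (G : SimpleGraph V) (p : ℝ) (P : Measure (Set (Sym2 V))) : Prop :=
  IsProbabilityMeasure P ∧ P {ω | ω ⊆ G.edgeSet} = 1 ∧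
    ∀ s : Finset (Sym2 V), ↑s ⊆ G.edgeSet →
      P {ω | ∀ e ∈ s, e ∈ ω} = ENNReal.ofReal p ^ s.card

/-- There is exactly one infinite cluster in the configuration `ω`. -/
def uniqueInfCluster (G : SimpleGraph V) (ω : Set (Sym2 V)) : Prop :=
  (∃ v, (cluster G ω v).Infinite) ∧
    ∀ u v, (cluster G ω u).Infinite → (cluster G ω v).Infinite →
      cluster G ω u = cluster G ω v

/-- Insertion tolerance of a bond percolation process. -/
def InsertionTolerant (G : SimpleGraph V) (P : Measure (Set (Sym2 V))) : Prop :=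
  ∀ e ∈ G.edgeSet, ∀ A : Set (Set (Sym2 V)), MeasurableSet A → 0 < P A →
    0 < P ((fun ω => insert e ω) '' A)

/-- Deletion tolerance of a bond percolation process. -/
def DeletionTolerant (G : SimpleGraph V) (P : Measure (Set (Sym2 V))) : Prop :=
  ∀ e ∈ G.edgeSet, ∀ A : Set (Set (Sym2 V)), MeasurableSet A → 0 < P A →
    0 < P ((fun ω => ω \ {e}) '' A)

/-- The uniqueness threshold `p_u` of a graph: the infimum of the `p ∈ [0,1]`
for which Bernoulli(`p`) bond percolation has a unique infinite cluster a.s. -/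
noncomputable def pu (G : SimpleGraph V) : ℝ :=
  sInf {p : ℝ | p ∈ Set.Icc (0 : ℝ) 1 ∧
    ∀ P : Measure (Set (Sym2 V)), IsBernoulli G p P →
      ∀ᵐ ω ∂P, uniqueInfCluster G ω}

/-- The (right) Cayley graph of a group with respect to a generating set `S`. -/
def cayleyGraph (Γ : Type*) [Group Γ] (S : Finset Γ) : SimpleGraph Γ :=
  SimpleGraph.fromRel (fun v w => ∃ s ∈ S, w = v * s)

end Preamble

/-- The edge `e` is pivotal for the (infinite) cluster of `v` in `ω`, relative
to the property `A`: `e` is a non-open edge of `G` such that the cluster of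
`ω ∪ {e}` containing the cluster of `v` has a type (∈ `A` or ∉ `A`) different
from the type of the cluster of `v` in `ω`. -/
def PivotalEdge {V : Type*} (G : SimpleGraph V) (A : Set (Set V × Set (Sym2 V)))
    (ω : Set (Sym2 V)) (v : V) (e : Sym2 V) : Prop :=
  e ∈ G.edgeSet ∧ e ∉ ω ∧
    ¬(((cluster G (insert e ω) v, insert e ω) ∈ A) ↔ ((cluster G ω v, ω) ∈ A))


section Aux

variable {V : Type*}

lemma percGraph_mono (G : SimpleGraph V) {ω ω' : Set (Sym2 V)} (h : ω ⊆ ω') :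
    percGraph G ω ≤ percGraph G ω' := fun _ _ hh => ⟨hh.1, h hh.2⟩

lemma mem_percGraph_edgeSet (G : SimpleGraph V) (ω : Set (Sym2 V)) {e : Sym2 V} :
    e ∈ (percGraph G ω).edgeSet ↔ e ∈ G.edgeSet ∧ e ∈ ω := by
  induction e using Sym2.ind with
  | _ x y => simp [SimpleGraph.mem_edgeSet, percGraph]

lemma mem_cluster_iff (G : SimpleGraph V) (ω : Set (Sym2 V)) (v u : V) :
    u ∈ cluster G ω v ↔ ∃ p : G.Walk v u, ∀ e ∈ p.edges, e ∈ ω := by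
  constructor
  · rintro ⟨q⟩
    refine ⟨q.transfer G
      (fun e he => ((mem_percGraph_edgeSet G ω).1 (q.edges_subset_edgeSet he)).1), ?_⟩
    intro e he
    rw [SimpleGraph.Walk.edges_transfer] at he
    exact ((mem_percGraph_edgeSet G ω).1 (q.edges_subset_edgeSet he)).2
  · rintro ⟨p, hp⟩
    exact ⟨p.transfer (percGraph G ω)
      (fun e he => (mem_percGraph_edgeSet G ω).2 ⟨p.edges_subset_edgeSet he, hp e he⟩)⟩

lemma cluster_mono (G : SimpleGraph V) {ω ω' : Set (Sym2 V)} (h : ω ⊆ ω') (v : V) :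
    cluster G ω v ⊆ cluster G ω' v :=
  fun _ hu => SimpleGraph.Reachable.mono (percGraph_mono G h) hu

lemma cluster_eq_of_mem {G : SimpleGraph V} {ω : Set (Sym2 V)} {u v : V}
    (h : u ∈ cluster G ω v) : cluster G ω v = cluster G ω u := by
  have h' : (percGraph G ω).Reachable v u := h
  ext w
  exact ⟨fun hw => h'.symm.trans hw, fun hw => h'.trans hw⟩

lemma mem_ball_of_walk {V : Type*} (G : SimpleGraph V) (v₀ : V) (S : ℕ → Set V)
    (h0 : v₀ ∈ S 0) (hstep : ∀ n x y, x ∈ S n → G.Adj x y → y ∈ S (n + 1)) :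
    ∀ {w : V}, G.Walk w v₀ → ∃ n, w ∈ S n
  | _, SimpleGraph.Walk.nil => ⟨0, h0⟩
  | _, SimpleGraph.Walk.cons hadj q => by
    obtain ⟨n, hn⟩ := mem_ball_of_walk G v₀ S h0 hstep q
    exact ⟨n + 1, hstep n _ _ hn hadj.symm⟩

lemma countable_of_connected (G : SimpleGraph V) (hconn : G.Connected) (hlf : LocFin G) :
    Countable V := by
  obtain ⟨v₀⟩ := hconn.nonempty
  let S : ℕ → Set V := fun n => Nat.rec {v₀} (fun _ s => s ∪ ⋃ x ∈ s, G.neighborSet x) n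
  have hS : ∀ n, S (n + 1) = S n ∪ ⋃ x ∈ S n, G.neighborSet x := fun n => rfl
  have hfin : ∀ n, (S n).Finite := by
    intro n
    induction n with
    | zero => exact Set.finite_singleton _
    | succ n ih =>
      rw [hS]
      exact ih.union (Set.Finite.biUnion ih (fun x _ => hlf x))
  have hstep : ∀ n x y, x ∈ S n → G.Adj x y → y ∈ S (n + 1) := by
    intro n x y hx hxy
    rw [hS]
    exact Or.inr (Set.mem_biUnion hx hxy)
  have hcover : ∀ u : V, ∃ n, u ∈ S n := by
    intro u
    obtain ⟨p⟩ := hconn.preconnected u v₀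
    exact mem_ball_of_walk G v₀ S rfl hstep p
  have huniv : (Set.univ : Set V).Countable := by
    have hsub : (Set.univ : Set V) ⊆ ⋃ n, S n := fun u _ => Set.mem_iUnion.2 (hcover u)
    exact (Set.countable_iUnion (fun n => (hfin n).countable)).mono hsub
  exact Set.countable_univ_iff.1 huniv

section Meas

variable [Countable V]

lemma measurable_mem_cluster (G : SimpleGraph V) (v u : V) :
    Measurable fun ω : Set (Sym2 V) => u ∈ cluster G ω v := by
  have key : ∀ ω : Set (Sym2 V), (u ∈ cluster G ω v) ↔ ∃ l : List (Sym2 V),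
      (∃ p : G.Walk v u, p.edges = l) ∧ ∀ e ∈ l, e ∈ ω := by
    intro ω
    rw [mem_cluster_iff]
    constructor
    · rintro ⟨p, hp⟩; exact ⟨p.edges, ⟨p, rfl⟩, hp⟩
    · rintro ⟨l, ⟨p, rfl⟩, hl⟩; exact ⟨p, hl⟩
  simp only [key]
  exact Measurable.exists fun l => Measurable.and measurable_const
    (Measurable.forall fun e => Measurable.imp measurable_const (measurable_set_mem e))

lemma measurable_cluster (G : SimpleGraph V) (v : V) :
    Measurable fun ω : Set (Sym2 V) => cluster G ω v :=
  measurable_set_iff.2 fun u => measurable_mem_cluster G v u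

lemma measurable_typ (G : SimpleGraph V) {A : Set (Set V × Set (Sym2 V))}
    (hA : MeasurableSet A) (v : V) :
    Measurable fun ω : Set (Sym2 V) => ((cluster G ω v, ω) ∈ A) := by
  have h : Measurable fun ω : Set (Sym2 V) => (cluster G ω v, ω) :=
    (measurable_cluster G v).prodMk measurable_id
  exact (measurable_mem.2 hA).comp h

lemma measurable_infinite_cluster (G : SimpleGraph V) (v : V) :
    Measurable fun ω : Set (Sym2 V) => (cluster G ω v).Infinite :=
  (measurable_mem.2 MeasurableSet.setOf_infinite).comp (measurable_cluster G v)

lemma measurable_insert_config (e : Sym2 V) :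
    Measurable fun ω : Set (Sym2 V) => insert e ω := by
  rw [measurable_set_iff]
  intro a
  simp only [Set.mem_insert_iff]
  exact Measurable.or measurable_const (measurable_set_mem a)

lemma measurable_sdiff_config (e : Sym2 V) :
    Measurable fun ω : Set (Sym2 V) => ω \ {e} := by
  rw [measurable_set_iff]
  intro a
  simp only [Set.mem_diff, Set.mem_singleton_iff]
  exact Measurable.and (measurable_set_mem a) measurable_const

lemma image_insert_config (e : Sym2 V) (D : Set (Set (Sym2 V))) :
    (fun ω => insert e ω) '' D = {ω | e ∈ ω ∧ (ω ∈ D ∨ ω \ {e} ∈ D)} := by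
  ext ω'
  simp only [Set.mem_image, Set.mem_setOf_eq]
  constructor
  · rintro ⟨ω, hω, rfl⟩
    refine ⟨Set.mem_insert e ω, ?_⟩
    by_cases he : e ∈ ω
    · left; rwa [Set.insert_eq_self.2 he]
    · right; rwa [Set.insert_diff_self_of_notMem he]
  · rintro ⟨he, (h | h)⟩
    · exact ⟨ω', h, Set.insert_eq_self.2 he⟩
    · exact ⟨ω' \ {e}, h, by
        rw [Set.insert_diff_singleton, Set.insert_eq_self.2 he]⟩

lemma measurableSet_image_insert (e : Sym2 V) {D : Set (Set (Sym2 V))}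
    (hD : MeasurableSet D) : MeasurableSet ((fun ω => insert e ω) '' D) := by
  rw [image_insert_config]
  refine (measurableSet_mem e).inter (hD.union ?_)
  exact measurable_sdiff_config e hD

lemma measurable_foldr_insert (l : List (Sym2 V)) :
    Measurable fun ω : Set (Sym2 V) => l.foldr insert ω := by
  induction l with
  | nil => exact measurable_id
  | cons e l ih => exact (measurable_insert_config e).comp ih

lemma foldr_insert_eq_union (l : List (Sym2 V)) (ω : Set (Sym2 V)) :
    l.foldr insert ω = ω ∪ {a | a ∈ l} := by
  induction l with
  | nil => simp
  | cons e l ih =>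
    ext a
    simp only [List.foldr_cons, ih, Set.mem_insert_iff, Set.mem_union, Set.mem_setOf_eq,
      List.mem_cons]
    tauto

lemma insert_tol_list {G : SimpleGraph V} {P : Measure (Set (Sym2 V))}
    (hIT : InsertionTolerant G P) :
    ∀ l : List (Sym2 V), (∀ e ∈ l, e ∈ G.edgeSet) →
      ∀ C : Set (Set (Sym2 V)), MeasurableSet C → 0 < P C →
      MeasurableSet ((fun ω => l.foldr insert ω) '' C) ∧
        0 < P ((fun ω => l.foldr insert ω) '' C)
  | [], _, C, hC, hp => ⟨by simpa using hC, by simpa using hp⟩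
  | e :: l, hl, C, hC, hp => by
    obtain ⟨hm, hpos⟩ := insert_tol_list hIT l (fun a ha => hl a (List.mem_cons_of_mem e ha))
      C hC hp
    have himg : (fun ω => (e :: l).foldr insert ω) '' C
        = (fun ω => insert e ω) '' ((fun ω => l.foldr insert ω) '' C) := by
      rw [← Set.image_comp]; rfl
    rw [himg]
    exact ⟨measurableSet_image_insert e hm,
      hIT e (hl e List.mem_cons_self) _ hm hpos⟩

end Meas

lemma union_take_succ {α : Type*} (ω : Set α) (L : List α) {i : ℕ} (hi : i < L.length) :
    ω ∪ {a | a ∈ L.take (i + 1)} = insert (L[i]'hi) (ω ∪ {a | a ∈ L.take i}) := by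
  ext a
  simp only [Set.mem_union, Set.mem_setOf_eq, Set.mem_insert_iff,
    ← List.take_concat_get' L i hi, List.mem_append, List.mem_singleton]
  tauto

lemma exists_flip {b c : ℕ → Prop} {n : ℕ} (hb0 : b 0) (hc0 : ¬ c 0) (hbc : b n ↔ c n) :
    ∃ i < n, ¬((b (i + 1) ↔ b i) ∧ (c (i + 1) ↔ c i)) := by
  by_contra h
  push_neg at h
  have stable : ∀ i, i ≤ n → (b i ↔ b 0) ∧ (c i ↔ c 0) := by
    intro i
    induction i with
    | zero => exact fun _ => ⟨Iff.rfl, Iff.rfl⟩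
    | succ i ih =>
      intro hi
      obtain ⟨hbi, hci⟩ := h i (Nat.lt_of_succ_le hi)
      obtain ⟨hb0', hc0'⟩ := ih (Nat.le_of_succ_le hi)
      exact ⟨hbi.trans hb0', hci.trans hc0'⟩
  obtain ⟨hbn, hcn⟩ := stable n le_rfl
  exact hc0 (hcn.mp (hbc.mp (hbn.mpr hb0)))

lemma exists_pivotal_step (G : SimpleGraph V) {A : Set (Set V × Set (Sym2 V))}
    {ω : Set (Sym2 V)} {u v : V}
    (hu : (cluster G ω u).Infinite) (hv : (cluster G ω v).Infinite)
    (hAu : (cluster G ω u, ω) ∈ A) (hAv : (cluster G ω v, ω) ∉ A)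
    (p : G.Walk u v) :
    ∃ i < p.edges.length, ∃ w,
      (cluster G (ω ∪ {a | a ∈ p.edges.take i}) w).Infinite ∧
      ∃ e, PivotalEdge G A (ω ∪ {a | a ∈ p.edges.take i}) w e := by
  classical
  have hW0 : ω ∪ {a | a ∈ p.edges.take 0} = ω := by simp
  have hWsub : ∀ i, ω ⊆ ω ∪ {a | a ∈ p.edges.take i} := fun i => Set.subset_union_left
  have hWn : ∀ e ∈ p.edges, e ∈ ω ∪ {a | a ∈ p.edges.take p.edges.length} := by
    intro e he
    refine Or.inr ?_
    simp only [Set.mem_setOf_eq, List.take_length]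
    exact he
  have huvn : v ∈ cluster G (ω ∪ {a | a ∈ p.edges.take p.edges.length}) u :=
    (mem_cluster_iff G _ u v).2 ⟨p, fun e he => hWn e he⟩
  have key := exists_flip
    (b := fun i => (cluster G (ω ∪ {a | a ∈ p.edges.take i}) u,
      ω ∪ {a | a ∈ p.edges.take i}) ∈ A)
    (c := fun i => (cluster G (ω ∪ {a | a ∈ p.edges.take i}) v,
      ω ∪ {a | a ∈ p.edges.take i}) ∈ A)
    (n := p.edges.length)
    (by simpa only [hW0] using hAu)
    (by simpa only [hW0] using hAv)
    (by simp only [cluster_eq_of_mem huvn])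
  obtain ⟨i, hi, hne⟩ := key
  have hWsucc : ω ∪ {a | a ∈ p.edges.take (i + 1)}
      = insert (p.edges[i]'hi) (ω ∪ {a | a ∈ p.edges.take i}) := union_take_succ ω p.edges hi
  have heG : (p.edges[i]'hi) ∈ G.edgeSet :=
    p.edges_subset_edgeSet (List.getElem_mem hi)
  have henotin : (p.edges[i]'hi) ∉ ω ∪ {a | a ∈ p.edges.take i} := by
    intro hmem
    apply hne
    have heq : ω ∪ {a | a ∈ p.edges.take (i + 1)} = ω ∪ {a | a ∈ p.edges.take i} := by
      rw [hWsucc, Set.insert_eq_self.2 hmem]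
    rw [heq]
    exact ⟨Iff.rfl, Iff.rfl⟩
  rw [not_and_or] at hne
  have hinf : ∀ w : V, (cluster G ω w).Infinite →
      (cluster G (ω ∪ {a | a ∈ p.edges.take i}) w).Infinite :=
    fun w hw => hw.mono (cluster_mono G (hWsub i) w)
  rcases hne with hne | hne
  · refine ⟨i, hi, u, hinf u hu, p.edges[i]'hi, heG, henotin, ?_⟩
    rw [← hWsucc]
    exact hne
  · refine ⟨i, hi, v, hinf v hv, p.edges[i]'hi, heG, henotin, ?_⟩
    rw [← hWsucc]
    exact hne

end Aux

/-- **Pivotals lemma.**  Suppose `(P, ω)` is an insertion-tolerant bond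
percolation process on a connected locally finite graph `G`, and let
`A ⊆ 2^V × 2^E` be measurable.  Assume that with positive probability there
co-exist infinite clusters in `A` and outside `A`.  Then with positive
probability there is an infinite cluster of the percolation that has a pivotal
edge. -/
theorem pivotals_lemma
    {V : Type*} (G : SimpleGraph V) (hconn : G.Connected) (hlf : LocFin G)
    (P : Measure (Set (Sym2 V))) (hprob : IsProbabilityMeasure P)
    (hIT : InsertionTolerant G P)
    (A : Set (Set V × Set (Sym2 V))) (hA : MeasurableSet A)
    (hcoex : 0 < P {ω | ∃ u v, (cluster G ω u).Infinite ∧ (cluster G ω v).Infinite ∧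
      (cluster G ω u, ω) ∈ A ∧ (cluster G ω v, ω) ∉ A}) :
    0 < P {ω | ∃ v, (cluster G ω v).Infinite ∧ ∃ e, PivotalEdge G A ω v e} := by
  classical
  have hV : Countable V := countable_of_connected G hconn hlf
  set Piv := {ω : Set (Sym2 V) | ∃ v, (cluster G ω v).Infinite ∧ ∃ e, PivotalEdge G A ω v e}
    with hPivdef
  have hPivMeas : MeasurableSet Piv := by
    rw [hPivdef]
    apply measurableSet_setOf.2
    apply Measurable.exists
    intro w
    apply Measurable.and (measurable_infinite_cluster G w)
    apply Measurable.exists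
    intro e
    simp only [PivotalEdge]
    apply Measurable.and measurable_const
    apply Measurable.and (measurable_set_notMem e)
    apply Measurable.not
    exact ((measurable_typ G hA w).comp (measurable_insert_config e)).iff (measurable_typ G hA w)
  have hBmeas : ∀ uv : V × V, MeasurableSet {ω : Set (Sym2 V) |
      (cluster G ω uv.1).Infinite ∧ (cluster G ω uv.2).Infinite ∧
      (cluster G ω uv.1, ω) ∈ A ∧ (cluster G ω uv.2, ω) ∉ A} := by
    intro uv
    apply measurableSet_setOf.2
    exact (measurable_infinite_cluster G uv.1).and ((measurable_infinite_cluster G uv.2).and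
      ((measurable_typ G hA uv.1).and ((measurable_typ G hA uv.2).not)))
  have hcoveq : {ω : Set (Sym2 V) | ∃ u v, (cluster G ω u).Infinite ∧
      (cluster G ω v).Infinite ∧ (cluster G ω u, ω) ∈ A ∧ (cluster G ω v, ω) ∉ A}
      = ⋃ uv : V × V, {ω : Set (Sym2 V) |
        (cluster G ω uv.1).Infinite ∧ (cluster G ω uv.2).Infinite ∧
        (cluster G ω uv.1, ω) ∈ A ∧ (cluster G ω uv.2, ω) ∉ A} := by
    ext ω
    simp only [Set.mem_iUnion, Set.mem_setOf_eq, Prod.exists]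
  obtain ⟨⟨u, v⟩, huv⟩ : ∃ uv : V × V, 0 < P {ω : Set (Sym2 V) |
      (cluster G ω uv.1).Infinite ∧ (cluster G ω uv.2).Infinite ∧
      (cluster G ω uv.1, ω) ∈ A ∧ (cluster G ω uv.2, ω) ∉ A} := by
    by_contra h
    push_neg at h
    have hz : P {ω : Set (Sym2 V) | ∃ u v, (cluster G ω u).Infinite ∧
        (cluster G ω v).Infinite ∧ (cluster G ω u, ω) ∈ A ∧ (cluster G ω v, ω) ∉ A} = 0 := by
      rw [hcoveq]
      exact measure_iUnion_null fun uv => nonpos_iff_eq_zero.1 (h uv)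
    exact absurd hz (ne_of_gt hcoex)
  obtain ⟨p⟩ : G.Reachable u v := hconn.preconnected u v
  set B := {ω : Set (Sym2 V) | (cluster G ω u).Infinite ∧ (cluster G ω v).Infinite ∧
      (cluster G ω u, ω) ∈ A ∧ (cluster G ω v, ω) ∉ A} with hBdef
  have huv' : 0 < P B := huv
  have hcov2 : B ⊆ ⋃ i : Fin p.edges.length,
      (B ∩ (fun ω : Set (Sym2 V) => ω ∪ {a | a ∈ p.edges.take i.1}) ⁻¹' Piv) := by
    intro ω hω
    obtain ⟨h1, h2, h3, h4⟩ := hω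
    obtain ⟨i, hi, hP⟩ := exists_pivotal_step G h1 h2 h3 h4 p
    exact Set.mem_iUnion.2 ⟨⟨i, hi⟩, ⟨h1, h2, h3, h4⟩, hP⟩
  obtain ⟨i, hCpos⟩ : ∃ i : Fin p.edges.length,
      0 < P (B ∩ (fun ω : Set (Sym2 V) => ω ∪ {a | a ∈ p.edges.take i.1}) ⁻¹' Piv) := by
    by_contra h
    push_neg at h
    have hz : P B = 0 := measure_mono_null hcov2
      (measure_iUnion_null fun i => nonpos_iff_eq_zero.1 (h i))
    exact absurd hz (ne_of_gt huv')
  have hFeq : (fun ω : Set (Sym2 V) => ω ∪ {a | a ∈ p.edges.take i.1})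
      = fun ω : Set (Sym2 V) => (p.edges.take i.1).foldr insert ω := by
    funext ω
    rw [foldr_insert_eq_union]
  have hCmeas : MeasurableSet
      (B ∩ (fun ω : Set (Sym2 V) => ω ∪ {a | a ∈ p.edges.take i.1}) ⁻¹' Piv) := by
    refine (hBmeas (u, v)).inter ?_
    rw [hFeq]
    exact measurable_foldr_insert (p.edges.take i.1) hPivMeas
  have hedges : ∀ e ∈ p.edges.take i.1, e ∈ G.edgeSet :=
    fun e he => p.edges_subset_edgeSet (List.take_subset _ _ he)
  obtain ⟨hm, hpos⟩ := insert_tol_list hIT (p.edges.take i.1) hedges _ hCmeas hCpos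
  have himg : (fun ω : Set (Sym2 V) => (p.edges.take i.1).foldr insert ω) ''
      (B ∩ (fun ω : Set (Sym2 V) => ω ∪ {a | a ∈ p.edges.take i.1}) ⁻¹' Piv) ⊆ Piv := by
    rintro _ ⟨ω, hω, rfl⟩
    have hmem : ω ∪ {a | a ∈ p.edges.take i.1} ∈ Piv := hω.2
    simpa only [foldr_insert_eq_union] using hmem
  exact lt_of_lt_of_le hpos (measure_mono himg)
end

section
/- Let Γ be a transitive closed subgroup of the automorphism group of an infinite connected locally finite graph G. If (P, ω) is a Γ-invariant insertion-tolerant bond percolation process on G, then almost every ergodic component of P is insertion tolerant; equivalently, for every Γ-invariant event G₀ ⊆ 2^E with P[G₀] > 0, the conditional measure P[· | G₀] is insertion tolerant. -/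
open MeasureTheory

open scoped ENNReal

section Aux

variable {V : Type*}

lemma sym2_map_inv_map (γ : Equiv.Perm V) (f : Sym2 V) :
    Sym2.map ↑γ⁻¹ (Sym2.map ↑γ f) = f := by
  rw [Sym2.map_map]
  have h : (⇑γ⁻¹ ∘ ⇑γ) = id := funext fun x => Equiv.symm_apply_apply γ x
  rw [h, Sym2.map_id, id_eq]

lemma sym2_map_map_inv (γ : Equiv.Perm V) (f : Sym2 V) :
    Sym2.map ↑γ (Sym2.map ↑γ⁻¹ f) = f := by
  have := sym2_map_inv_map γ⁻¹ f
  rwa [inv_inv] at this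

lemma mem_edgeAct (γ : Equiv.Perm V) (f : Sym2 V) (ω : Set (Sym2 V)) :
    f ∈ edgeAct γ ω ↔ Sym2.map ↑γ⁻¹ f ∈ ω := by
  constructor
  · rintro ⟨g, hg, rfl⟩
    rwa [sym2_map_inv_map]
  · intro h
    exact ⟨Sym2.map ↑γ⁻¹ f, h, sym2_map_map_inv γ f⟩

lemma edgeAct_inv_comp (γ : Equiv.Perm V) (ω : Set (Sym2 V)) :
    edgeAct γ⁻¹ (edgeAct γ ω) = ω := by
  show Sym2.map ↑γ⁻¹ '' (Sym2.map ↑γ '' ω) = ω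
  rw [← Set.image_comp]
  have h : (Sym2.map ↑γ⁻¹ ∘ Sym2.map ↑γ) = id :=
    funext fun f => sym2_map_inv_map γ f
  rw [h, Set.image_id]

lemma edgeAct_comp_inv (γ : Equiv.Perm V) (ω : Set (Sym2 V)) :
    edgeAct γ (edgeAct γ⁻¹ ω) = ω := by
  have := edgeAct_inv_comp γ⁻¹ ω
  rwa [inv_inv] at this

lemma measurable_edgeAct (γ : Equiv.Perm V) : Measurable (edgeAct (V := V) γ) := by
  rw [measurable_set_iff]
  intro f
  have h : (fun ω : Set (Sym2 V) => f ∈ edgeAct γ ω)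
      = fun ω : Set (Sym2 V) => Sym2.map ↑γ⁻¹ f ∈ ω :=
    funext fun ω => propext (mem_edgeAct γ f ω)
  rw [h]
  exact measurable_set_mem _

/-- `edgeAct γ` as a measurable equivalence. -/
def edgeActEquiv (γ : Equiv.Perm V) : Set (Sym2 V) ≃ᵐ Set (Sym2 V) where
  toEquiv :=
    { toFun := edgeAct γ
      invFun := edgeAct γ⁻¹
      left_inv := edgeAct_inv_comp γ
      right_inv := edgeAct_comp_inv γ }
  measurable_toFun := measurable_edgeAct γ
  measurable_invFun := measurable_edgeAct γ⁻¹

lemma measurable_insertEdge (e : Sym2 V) :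
    Measurable (fun ω : Set (Sym2 V) => insert e ω) := by
  rw [measurable_set_iff]
  intro f
  simp only [Set.mem_insert_iff]
  exact (measurable_const (a := f = e)).or (measurable_set_mem f)

lemma measurable_sdiffEdge (e : Sym2 V) :
    Measurable (fun ω : Set (Sym2 V) => ω \ {e}) := by
  rw [measurable_set_iff]
  intro f
  simp only [Set.mem_diff, Set.mem_singleton_iff]
  exact (measurable_set_mem f).and (measurable_const (a := ¬ f = e))

lemma insertEdge_image (e : Sym2 V) (A : Set (Set (Sym2 V))) :
    (fun ω : Set (Sym2 V) => insert e ω) '' A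
      = {ω : Set (Sym2 V) | e ∈ ω} ∩ (A ∪ (fun ω : Set (Sym2 V) => ω \ {e}) ⁻¹' A) := by
  ext ω
  constructor
  · rintro ⟨σ, hσ, rfl⟩
    refine ⟨Set.mem_insert _ _, ?_⟩
    by_cases he : e ∈ σ
    · left
      show insert e σ ∈ A
      rwa [Set.insert_eq_self.2 he]
    · right
      show insert e σ \ {e} ∈ A
      rwa [Set.insert_diff_self_of_notMem he]
  · rintro ⟨he, h | h⟩
    · exact ⟨ω, h, Set.insert_eq_self.2 he⟩
    · refine ⟨ω \ {e}, h, ?_⟩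
      show insert e (ω \ {e}) = ω
      rw [Set.insert_diff_singleton]
      exact Set.insert_eq_self.2 he

lemma measurableSet_insertEdge_image (e : Sym2 V) {A : Set (Set (Sym2 V))}
    (hA : MeasurableSet A) :
    MeasurableSet ((fun ω : Set (Sym2 V) => insert e ω) '' A) := by
  rw [insertEdge_image]
  exact (measurableSet_mem e).inter (hA.union (measurable_sdiffEdge e hA))

/-- A cylinder event: membership is determined by the coordinates in `S`. -/
def Determined (S : Finset (Sym2 V)) (C : Set (Set (Sym2 V))) : Prop :=
  ∀ ω ω' : Set (Sym2 V), (∀ f ∈ S, (f ∈ ω ↔ f ∈ ω')) → (ω ∈ C ↔ ω' ∈ C)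

/-- Any measurable event can be approximated in measure by cylinder events. -/
lemma approx_lemma (P : Measure (Set (Sym2 V))) [IsFiniteMeasure P]
    {A : Set (Set (Sym2 V))} (hA : MeasurableSet A) {ε : ℝ≥0∞} (hε : 0 < ε) :
    ∃ (S : Finset (Sym2 V)) (C : Set (Set (Sym2 V))),
      Determined S C ∧ P ((A \ C) ∪ (C \ A)) < ε := by
  classical
  set p : Set (Set (Sym2 V)) → Prop := fun A => MeasurableSet A ∧ ∀ ε : ℝ≥0∞, 0 < ε →
      ∃ (S : Finset (Sym2 V)) (C : Set (Set (Sym2 V))),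
        Determined S C ∧ P ((A \ C) ∪ (C \ A)) < ε with hp
  have hempty : p ∅ := by
    refine ⟨MeasurableSet.empty, fun ε hε => ⟨∅, ∅, fun ω ω' _ => Iff.rfl, ?_⟩⟩
    simpa using hε
  have hcompl : ∀ B, p B → p Bᶜ := by
    rintro B ⟨hBm, hBa⟩
    refine ⟨hBm.compl, fun ε hε => ?_⟩
    obtain ⟨S, C, hdet, hlt⟩ := hBa ε hε
    refine ⟨S, Cᶜ, fun ω ω' h => not_congr (hdet ω ω' h), ?_⟩
    have hset : (Bᶜ \ Cᶜ) ∪ (Cᶜ \ Bᶜ) = (B \ C) ∪ (C \ B) := by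
      ext ω
      simp only [Set.mem_union, Set.mem_diff, Set.mem_compl_iff]
      tauto
    rwa [hset]
  have hunion : ∀ g : ℕ → Set (Set (Sym2 V)), (∀ n, p (g n)) → p (⋃ n, g n) := by
    intro g hg
    refine ⟨MeasurableSet.iUnion fun n => (hg n).1, fun ε hε => ?_⟩
    set δ : ℝ≥0∞ := min ε 1 with hδdef
    have hδ0 : 0 < δ := lt_min hε zero_lt_one
    have hδε : δ ≤ ε := min_le_left _ _
    have hhalfpos : 0 < δ / 2 := ENNReal.half_pos hδ0.ne'
    have hhalfne : δ / 2 ≠ ∞ := by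
      refine ne_top_of_le_ne_top ENNReal.one_ne_top ?_
      calc δ / 2 ≤ δ := ENNReal.half_le_self
        _ ≤ 1 := min_le_right _ _
    set T : Set (Set (Sym2 V)) := ⋃ n, g n with hT
    have haccm : ∀ n, MeasurableSet (Set.accumulate g n) := by
      intro n
      rw [Set.accumulate_def]
      exact MeasurableSet.biUnion (Set.to_countable _) fun i _ => (hg i).1
    have htend : Filter.Tendsto (fun n => P (T \ Set.accumulate g n))
        Filter.atTop (nhds 0) := by
      have h1 : Filter.Tendsto (fun n => P (Set.accumulate g n)) Filter.atTop (nhds (P T)) :=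
        tendsto_measure_iUnion_accumulate
      have h2 : Filter.Tendsto (fun n => P T - P (Set.accumulate g n))
          Filter.atTop (nhds (P T - P T)) :=
        ENNReal.Tendsto.sub tendsto_const_nhds h1 (Or.inl (measure_ne_top P T))
      rw [tsub_self] at h2
      refine h2.congr fun n => ?_
      rw [measure_diff (Set.accumulate_subset_iUnion n) (haccm n).nullMeasurableSet
        (measure_ne_top P _)]
    obtain ⟨N, hN⟩ := (htend.eventually (gt_mem_nhds hhalfpos)).exists
    set c : ℝ≥0∞ := δ / 2 / ((N : ℝ≥0∞) + 1) with hc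
    have hc0 : 0 < c := ENNReal.div_pos hhalfpos.ne' (by simp)
    choose Sfun Cfun hdet hlt using fun n : ℕ => (hg n).2 c hc0
    refine ⟨(Finset.range (N + 1)).biUnion Sfun, ⋃ i ∈ Finset.range (N + 1), Cfun i, ?_, ?_⟩
    · intro ω ω' h
      have key : ∀ i ∈ Finset.range (N + 1), (ω ∈ Cfun i ↔ ω' ∈ Cfun i) := fun i hi =>
        hdet i ω ω' fun f hf => h f (Finset.mem_biUnion.2 ⟨i, hi, hf⟩)
      constructor
      · intro hmem
        obtain ⟨i, hi, hm⟩ := Set.mem_iUnion₂.1 hmem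
        exact Set.mem_iUnion₂.2 ⟨i, hi, (key i hi).1 hm⟩
      · intro hmem
        obtain ⟨i, hi, hm⟩ := Set.mem_iUnion₂.1 hmem
        exact Set.mem_iUnion₂.2 ⟨i, hi, (key i hi).2 hm⟩
    · set C : Set (Set (Sym2 V)) := ⋃ i ∈ Finset.range (N + 1), Cfun i with hC
      have hsub : (T \ C) ∪ (C \ T) ⊆ (T \ Set.accumulate g N)
          ∪ ⋃ i ∈ Finset.range (N + 1), ((g i \ Cfun i) ∪ (Cfun i \ g i)) := by
        rintro ω (⟨hω, hωC⟩ | ⟨hωC, hω⟩)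
        · by_cases hacc : ω ∈ Set.accumulate g N
          · rw [Set.mem_accumulate] at hacc
            obtain ⟨i, hi, hgi⟩ := hacc
            refine Or.inr (Set.mem_iUnion₂.2 ⟨i, Finset.mem_range.2 (by omega), Or.inl ⟨hgi, ?_⟩⟩)
            intro hcmem
            exact hωC (Set.mem_iUnion₂.2 ⟨i, Finset.mem_range.2 (by omega), hcmem⟩)
          · exact Or.inl ⟨hω, hacc⟩
        · obtain ⟨i, hi, hci⟩ := Set.mem_iUnion₂.1 hωC
          refine Or.inr (Set.mem_iUnion₂.2 ⟨i, hi, Or.inr ⟨hci, ?_⟩⟩)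
          intro hgi
          exact hω (Set.mem_iUnion.2 ⟨i, hgi⟩)
      have hsum : ∑ i ∈ Finset.range (N + 1), P ((g i \ Cfun i) ∪ (Cfun i \ g i))
          ≤ δ / 2 := by
        calc ∑ i ∈ Finset.range (N + 1), P ((g i \ Cfun i) ∪ (Cfun i \ g i))
            ≤ ∑ _i ∈ Finset.range (N + 1), c :=
              Finset.sum_le_sum fun i _ => (hlt i).le
          _ = ((N : ℝ≥0∞) + 1) * c := by
              rw [Finset.sum_const, Finset.card_range, nsmul_eq_mul]
              push_cast
              ring
          _ = δ / 2 := ENNReal.mul_div_cancel' (by simp) (by simp)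
      calc P ((T \ C) ∪ (C \ T))
          ≤ P ((T \ Set.accumulate g N)
            ∪ ⋃ i ∈ Finset.range (N + 1), ((g i \ Cfun i) ∪ (Cfun i \ g i))) :=
            measure_mono hsub
        _ ≤ P (T \ Set.accumulate g N)
            + P (⋃ i ∈ Finset.range (N + 1), ((g i \ Cfun i) ∪ (Cfun i \ g i))) :=
            measure_union_le _ _
        _ ≤ P (T \ Set.accumulate g N)
            + ∑ i ∈ Finset.range (N + 1), P ((g i \ Cfun i) ∪ (Cfun i \ g i)) := by
            gcongr
            exact measure_biUnion_finset_le _ _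
        _ < δ / 2 + δ / 2 := ENNReal.add_lt_add_of_lt_of_le (ne_top_of_le_ne_top hhalfne hsum) hN hsum
        _ = δ := ENNReal.add_halves δ
        _ ≤ ε := hδε
  have hself : ∀ (C : Set (Set (Sym2 V))) (S : Finset (Sym2 V)),
      MeasurableSet C → Determined S C → p C := by
    intro C S hCm hCd
    refine ⟨hCm, fun ε hε => ⟨S, C, hCd, ?_⟩⟩
    simpa using hε
  let m' : MeasurableSpace (Set (Sym2 V)) := ⟨p, hempty, hcompl, hunion⟩
  have hle : (Set.instMeasurableSpace : MeasurableSpace (Set (Sym2 V))) ≤ m' := by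
    have hpi : (Set.instMeasurableSpace : MeasurableSpace (Set (Sym2 V)))
        = MeasurableSpace.pi := rfl
    rw [hpi]
    refine iSup_le fun f => ?_
    intro s hs
    obtain ⟨t, -, rfl⟩ := hs
    refine hself _ {f} ?_ ?_
    · exact measurable_set_mem f (show MeasurableSet t from MeasurableSpace.measurableSet_top)
    · intro ω ω' h
      have hf' : ω f = ω' f := propext (h f (Finset.mem_singleton_self f))
      show (ω f ∈ t) ↔ (ω' f ∈ t)
      rw [hf']
  exact (hle A hA).2 ε hε

/-- A finite set of pairs has a finite set of endpoints, so by transitivity we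
can move the edge `e` off any finite set of coordinates. -/
lemma exists_moving_perm [Infinite V] (Γ : Subgroup (Equiv.Perm V))
    (htrans : TransSubgroup Γ) (e : Sym2 V) (S : Finset (Sym2 V)) :
    ∃ γ ∈ Γ, Sym2.map ↑γ e ∉ S := by
  classical
  have hWfin : (⋃ f ∈ S, {x : V | x ∈ f}).Finite := by
    refine Set.Finite.biUnion S.finite_toSet fun f _ => ?_
    induction f with
    | _ a b =>
      have : {x : V | x ∈ s(a, b)} = {a, b} := by
        ext x; simp [Sym2.mem_iff]
      rw [this]
      exact (Set.finite_singleton b).insert a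
  obtain ⟨z, hz⟩ := hWfin.infinite_compl.nonempty
  obtain ⟨γ, hγ, hγz⟩ := htrans e.out.1 z
  refine ⟨γ, hγ, fun hmem => ?_⟩
  have hze : z ∈ Sym2.map ↑γ e := by
    rw [← hγz]
    exact Sym2.mem_map.2 ⟨e.out.1, Sym2.out_fst_mem e, rfl⟩
  exact hz (Set.mem_iUnion₂.2 ⟨Sym2.map ↑γ e, hmem, hze⟩)

/-- The key lemma: a `Γ`-invariant event is almost surely insensitive to the
insertion of a fixed edge, for a `Γ`-invariant insertion-tolerant process. -/
lemma invariant_insensitive [Infinite V] (G : SimpleGraph V)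
    (Γ : Subgroup (Equiv.Perm V)) (htrans : TransSubgroup Γ)
    (P : Measure (Set (Sym2 V))) (hP : InvariantPerc Γ P)
    (hIT : InsertionTolerant G P)
    (G₀ : Set (Set (Sym2 V))) (hG₀ : MeasurableSet G₀)
    (hinv : ∀ γ ∈ Γ, edgeAct γ ⁻¹' G₀ = G₀)
    (e : Sym2 V) (he : e ∈ G.edgeSet) :
    P (G₀ ∩ {ω : Set (Sym2 V) | insert e ω ∉ G₀}) = 0 := by
  classical
  haveI := hP.1
  have hm : Measurable (fun ω : Set (Sym2 V) => insert e ω) := measurable_insertEdge e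
  -- the pushforward under insertion is absolutely continuous w.r.t. `P`
  have hac : P.map (fun ω : Set (Sym2 V) => insert e ω) ≪ P := by
    refine Measure.AbsolutelyContinuous.mk fun N hN hN0 => ?_
    rw [Measure.map_apply hm hN]
    by_contra hne
    have hpos : 0 < P ((fun ω : Set (Sym2 V) => insert e ω) ⁻¹' N) :=
      pos_iff_ne_zero.2 hne
    have himg := hIT e he _ (hm hN) hpos
    have : P ((fun ω : Set (Sym2 V) => insert e ω) ''
        ((fun ω : Set (Sym2 V) => insert e ω) ⁻¹' N)) ≤ P N :=
      measure_mono (Set.image_preimage_subset _ _)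
    rw [hN0] at this
    exact absurd (le_antisymm this zero_le) himg.ne'
  -- approximate `G₀` by cylinders and move them off `e`
  have hsn : ∀ n : ℕ, ∃ C' : Set (Set (Sym2 V)),
      (∀ ω : Set (Sym2 V), insert e ω ∈ C' ↔ ω ∈ C') ∧
      P ((G₀ \ C') ∪ (C' \ G₀)) < (2⁻¹ : ℝ≥0∞) ^ n := by
    intro n
    have hpow : (0 : ℝ≥0∞) < (2⁻¹ : ℝ≥0∞) ^ n :=
      ENNReal.pow_pos (by simp) n
    obtain ⟨S, C, hdet, hlt⟩ := approx_lemma P hG₀ hpow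
    obtain ⟨γ, hγ, hγe⟩ := exists_moving_perm Γ htrans e S
    refine ⟨edgeAct γ ⁻¹' C, ?_, ?_⟩
    · intro ω
      refine hdet _ _ fun f hf => ?_
      have him : edgeAct γ (insert e ω) = insert (Sym2.map ↑γ e) (edgeAct γ ω) :=
        Set.image_insert_eq
      rw [him, Set.mem_insert_iff]
      have hfne : f ≠ Sym2.map ↑γ e := fun hfe => hγe (hfe ▸ hf)
      simp [hfne]
    · have hmapP : Measure.map (edgeAct γ) P = P := hP.2 γ hγ
      have happ : ∀ s : Set (Set (Sym2 V)), P (edgeAct γ ⁻¹' s) = P s := by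
        intro s
        conv_rhs => rw [← hmapP]
        have : Measure.map (edgeAct γ) P = Measure.map (edgeActEquiv γ) P := rfl
        rw [this, MeasurableEquiv.map_apply]
        rfl
      have hpre : edgeAct γ ⁻¹' ((G₀ \ C) ∪ (C \ G₀))
          = (G₀ \ edgeAct γ ⁻¹' C) ∪ (edgeAct γ ⁻¹' C \ G₀) := by
        rw [Set.preimage_union, Set.preimage_diff, Set.preimage_diff, hinv γ hγ]
      calc P ((G₀ \ edgeAct γ ⁻¹' C) ∪ (edgeAct γ ⁻¹' C \ G₀))
          = P (edgeAct γ ⁻¹' ((G₀ \ C) ∪ (C \ G₀))) := by rw [hpre]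
        _ = P ((G₀ \ C) ∪ (C \ G₀)) := happ _
        _ < (2⁻¹ : ℝ≥0∞) ^ n := hlt
  choose Cf hCins hClt using hsn
  set s : ℕ → Set (Set (Sym2 V)) := fun n => (G₀ \ Cf n) ∪ (Cf n \ G₀) with hs
  have hsum : ∑' n, P (s n) ≠ ∞ := by
    have hle : ∑' n, P (s n) ≤ ∑' n : ℕ, (2⁻¹ : ℝ≥0∞) ^ n :=
      ENNReal.tsum_le_tsum fun n => (hClt n).le
    have hgeo : ∑' n : ℕ, (2⁻¹ : ℝ≥0∞) ^ n = 2 := by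
      rw [ENNReal.tsum_geometric, ENNReal.one_sub_inv_two, inv_inv]
    exact ne_top_of_le_ne_top (by rw [hgeo]; exact ENNReal.ofNat_ne_top) hle
  set D : Set (Set (Sym2 V)) := Filter.limsup s Filter.atTop with hD
  have hDnull : P D = 0 := MeasureTheory.measure_limsup_atTop_eq_zero hsum
  have hDnull' : P ((fun ω : Set (Sym2 V) => insert e ω) ⁻¹' D) = 0 := by
    have h1 : P ((fun ω : Set (Sym2 V) => insert e ω) ⁻¹' D)
        ≤ (P.map (fun ω : Set (Sym2 V) => insert e ω)) D :=
      Measure.le_map_apply hm.aemeasurable D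
    have h2 : (P.map (fun ω : Set (Sym2 V) => insert e ω)) D = 0 := hac hDnull
    exact le_antisymm (h2 ▸ h1) zero_le
  have hQsub : G₀ ∩ {ω : Set (Sym2 V) | insert e ω ∉ G₀}
      ⊆ D ∪ (fun ω : Set (Sym2 V) => insert e ω) ⁻¹' D := by
    intro ω ⟨hω, hωins⟩
    by_contra hnot
    rw [Set.mem_union] at hnot
    push_neg at hnot
    obtain ⟨hω1, hω2⟩ := hnot
    have hmemiff : ∀ σ : Set (Sym2 V), σ ∉ D → ∃ N, ∀ n ≥ N, σ ∉ s n := by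
      intro σ hσ
      rw [hD, Filter.limsup_eq_iInf_iSup_of_nat] at hσ
      have hex : ∃ N, σ ∉ ⋃ i, ⋃ (_ : i ≥ N), s i := by
        by_contra hcon
        push_neg at hcon
        exact hσ (Set.mem_iInter.2 hcon)
      obtain ⟨N, hN⟩ := hex
      refine ⟨N, fun n hn hns => hN ?_⟩
      exact Set.mem_iUnion.2 ⟨n, Set.mem_iUnion.2 ⟨hn, hns⟩⟩
    obtain ⟨N₁, hN₁⟩ := hmemiff ω hω1
    obtain ⟨N₂, hN₂⟩ := hmemiff (insert e ω) hω2
    set n := max N₁ N₂ with hn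
    have h1 : ω ∉ s n := hN₁ n (le_max_left _ _)
    have h2 : insert e ω ∉ s n := hN₂ n (le_max_right _ _)
    rw [hs, Set.mem_union, Set.mem_diff, Set.mem_diff] at h1 h2
    push_neg at h1 h2
    have hωC : ω ∈ Cf n := h1.1 hω
    have hinsC : insert e ω ∈ Cf n := (hCins n ω).2 hωC
    exact hωins (h2.2 hinsC)
  have hle0 : P (G₀ ∩ {ω : Set (Sym2 V) | insert e ω ∉ G₀}) ≤ 0 := by
    calc P (G₀ ∩ {ω : Set (Sym2 V) | insert e ω ∉ G₀})
        ≤ P (D ∪ (fun ω : Set (Sym2 V) => insert e ω) ⁻¹' D) := measure_mono hQsub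
      _ ≤ P D + P ((fun ω : Set (Sym2 V) => insert e ω) ⁻¹' D) := measure_union_le _ _
      _ = 0 := by rw [hDnull, hDnull', add_zero]
  exact le_antisymm hle0 zero_le

end Aux

/-- **Ergodic components of insertion-tolerant percolation are insertion
tolerant.**  Let `Γ` be a transitive closed subgroup of the automorphism group
of an infinite connected locally finite graph `G`.  If `(P, ω)` is a
`Γ`-invariant insertion-tolerant bond percolation process on `G`, then for
every `Γ`-invariant event `G₀` with `P[G₀] > 0`, the conditional measure
`P[· | G₀]` is insertion tolerant (equivalently, almost every ergodic
component of `P` is insertion tolerant). -/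
theorem ergodic_components_insertion_tolerant
    {V : Type*} [Infinite V] (G : SimpleGraph V) (hconn : G.Connected)
    (hlf : LocFin G)
    (Γ : Subgroup (Equiv.Perm V)) (haut : ∀ γ ∈ Γ, IsGraphAut G γ)
    (hclosed : ClosedSubgroup' Γ) (htrans : TransSubgroup Γ)
    (P : Measure (Set (Sym2 V))) (hP : InvariantPerc Γ P)
    (hIT : InsertionTolerant G P) :
    ∀ G₀ : Set (Set (Sym2 V)), MeasurableSet G₀ →
      (∀ γ ∈ Γ, edgeAct γ ⁻¹' G₀ = G₀) → 0 < P G₀ →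
      InsertionTolerant G (ProbabilityTheory.cond P G₀) := by
  intro G₀ hG₀ hinv hpos
  haveI := hP.1
  intro e he A hA hApos
  rw [ProbabilityTheory.cond_apply hG₀] at hApos
  rw [ProbabilityTheory.cond_apply hG₀]
  -- from positivity of the conditional measure, `P (G₀ ∩ A) > 0`
  have hPA : 0 < P (G₀ ∩ A) := by
    by_contra h
    push_neg at h
    have h0 : P (G₀ ∩ A) = 0 := le_antisymm h zero_le
    rw [h0, mul_zero] at hApos
    exact lt_irrefl _ hApos
  -- the bad set has measure zero
  have hins : P (G₀ ∩ {ω : Set (Sym2 V) | insert e ω ∉ G₀}) = 0 :=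
    invariant_insensitive G Γ htrans P hP hIT G₀ hG₀ hinv e he
  -- hence almost all of `G₀ ∩ A` stays in `G₀` after inserting `e`
  set B : Set (Set (Sym2 V)) :=
    G₀ ∩ A ∩ {ω : Set (Sym2 V) | insert e ω ∈ G₀} with hBdef
  have hBm : MeasurableSet B :=
    (hG₀.inter hA).inter (measurable_insertEdge e hG₀)
  have hBpos : 0 < P B := by
    by_contra h
    push_neg at h
    have hB0 : P B = 0 := le_antisymm h zero_le
    have hcover : G₀ ∩ A ⊆ B ∪ (G₀ ∩ {ω : Set (Sym2 V) | insert e ω ∉ G₀}) := by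
      intro ω ⟨hω1, hω2⟩
      by_cases hb : insert e ω ∈ G₀
      · exact Or.inl ⟨⟨hω1, hω2⟩, hb⟩
      · exact Or.inr ⟨hω1, hb⟩
    have : P (G₀ ∩ A) ≤ P B + P (G₀ ∩ {ω : Set (Sym2 V) | insert e ω ∉ G₀}) :=
      (measure_mono hcover).trans (measure_union_le _ _)
    rw [hB0, hins, add_zero] at this
    exact absurd (le_antisymm this zero_le) hPA.ne'
  -- apply insertion tolerance to `B`
  have himg : 0 < P ((fun ω : Set (Sym2 V) => insert e ω) '' B) := hIT e he B hBm hBpos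
  have hsub : (fun ω : Set (Sym2 V) => insert e ω) '' B
      ⊆ G₀ ∩ ((fun ω : Set (Sym2 V) => insert e ω) '' A) := by
    rintro ω' ⟨σ, ⟨⟨hσ1, hσ2⟩, hσ3⟩, rfl⟩
    exact ⟨hσ3, ⟨σ, hσ2, rfl⟩⟩
  have hfin : 0 < P (G₀ ∩ ((fun ω : Set (Sym2 V) => insert e ω) '' A)) :=
    lt_of_lt_of_le himg (measure_mono hsub)
  exact ENNReal.mul_pos (ENNReal.inv_ne_zero.2 (measure_ne_top P G₀)) hfin.ne'
end

section
/- Let G be a graph and x, y two vertices of G. Let θ ∈ (0,1) and c > 0 be constants. Suppose μ is a probability measure on (possibly self-intersecting) paths joining x to y in G such that (μ × μ){(φ, ψ) : |φ ∩ ψ| = n} ≤ c θⁿ for all n ∈ ℕ, where |φ ∩ ψ| denotes the number of edges the paths φ and ψ have in common (as sets of edges). Then for Bernoulli(p) bond percolation on G with θ < p < 1, the connection probability satisfies τ(x, y) ≥ c⁻¹(1 − θ/p). -/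
open MeasureTheory

open scoped ENNReal

/-- The (discrete) measurable structure on the space of walks from `x` to `y`
in `G`. -/
instance walkMeasurableSpace {V : Type*} (G : SimpleGraph V) (x y : V) :
    MeasurableSpace (G.Walk x y) := ⊤

/-- The number of edges that the two (possibly self-intersecting) paths `φ`
and `ψ` have in common, as sets of edges. -/
noncomputable def sharedEdges {V : Type*} {G : SimpleGraph V} {x y : V}
    (φ ψ : G.Walk x y) : ℕ :=
  letI := Classical.decEq (Sym2 V)
  (φ.edges.toFinset ∩ ψ.edges.toFinset).card

section AuxBPP

variable {V : Type*}

/-- The cylinder event that all edges in `s` are open. -/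
def cylEvent (s : Finset (Sym2 V)) : Set (Set (Sym2 V)) := {ω | ∀ e ∈ s, e ∈ ω}

lemma measurableSet_cylEvent (s : Finset (Sym2 V)) : MeasurableSet (cylEvent s) := by
  have h : cylEvent s = ⋂ e ∈ s, {ω : Set (Sym2 V) | e ∈ ω} := by
    ext ω; simp [cylEvent]
  rw [h]
  exact MeasurableSet.biInter s.countable_toSet fun e _ => measurableSet_mem e

lemma ennreal_two_mul_le (a b : ℝ≥0∞) (hb0 : b ≠ 0) (hbt : b ≠ ⊤) :
    2 * a ≤ b + a ^ 2 / b := by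
  rcases eq_or_ne a ⊤ with ha | ha
  · have h2 : a ^ 2 / b = ⊤ := by
      rw [ha]
      simpa [pow_two] using ENNReal.top_div_of_ne_top hbt
    simp [h2]
  · have key : 2 * a * b ≤ b ^ 2 + a ^ 2 := by
      lift a to NNReal using ha
      lift b to NNReal using hbt
      have : (2 : NNReal) * a * b ≤ b ^ 2 + a ^ 2 := by
        rw [← NNReal.coe_le_coe]
        push_cast
        nlinarith [sq_nonneg ((a : ℝ) - (b : ℝ))]
      exact_mod_cast this
    have hb : b ^ 2 / b = b := by
      rw [pow_two, mul_div_assoc, ENNReal.div_self hb0 hbt, mul_one]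
    calc 2 * a = 2 * a * b / b := by
          rw [mul_div_assoc, ENNReal.div_self hb0 hbt, mul_one]
      _ ≤ (b ^ 2 + a ^ 2) / b := ENNReal.div_le_div_right key b
      _ = b + a ^ 2 / b := by rw [ENNReal.add_div, hb]

end AuxBPP

lemma walk_measurable {V : Type*} {G : SimpleGraph V} {x y : V} {β : Type*}
    [MeasurableSpace β] (f : G.Walk x y → β) : Measurable f :=
  measurable_from_top

/-- **Second-moment lower bound for connection probabilities**
(Benjamini–Pemantle–Peres technique).  Let `x, y` be vertices of `G`, let
`θ ∈ (0,1)` and `c > 0`, and let `μ` be a probability measure on paths joining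
`x` to `y` such that `(μ × μ){(φ,ψ) : |φ ∩ ψ| = n} ≤ c θⁿ` for all `n`.  Then,
for Bernoulli(`p`) bond percolation on `G` with `θ < p < 1`,
`τ(x,y) ≥ c⁻¹ (1 − θ/p)`. -/
theorem connection_lower_bound
    {V : Type*} (G : SimpleGraph V) (x y : V)
    (θ c : ℝ) (hθ : θ ∈ Set.Ioo (0 : ℝ) 1) (hc : 0 < c)
    (μ : Measure (G.Walk x y)) (hμ : IsProbabilityMeasure μ)
    (hint : ∀ n : ℕ, (μ.prod μ) {q | sharedEdges q.1 q.2 = n} ≤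
      ENNReal.ofReal (c * θ ^ n))
    (p : ℝ) (hp1 : θ < p) (hp2 : p < 1)
    (P : Measure (Set (Sym2 V))) (hP : IsBernoulli G p P) :
    ENNReal.ofReal (c⁻¹ * (1 - θ / p)) ≤ P {ω | y ∈ cluster G ω x} := by
  letI := Classical.decEq (Sym2 V)
  obtain ⟨hθ0, hθ1⟩ := hθ
  have hp0 : (0 : ℝ) < p := hθ0.trans hp1
  obtain ⟨hPprob, hPsub, hPcyl⟩ := hP
  haveI := hPprob
  haveI := hμ
  set p' : ℝ≥0∞ := ENNReal.ofReal p with hp'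
  have hp'0 : p' ≠ 0 := (ENNReal.ofReal_pos.mpr hp0).ne'
  have hp't : p' ≠ ⊤ := ENNReal.ofReal_ne_top
  have hcan : ∀ k : ℕ, p'⁻¹ ^ k * p' ^ k = 1 := fun k => by
    rw [← mul_pow, ENNReal.inv_mul_cancel hp'0 hp't, one_pow]
  -- the edge finset of a walk and its weight
  set E : G.Walk x y → Finset (Sym2 V) := fun φ => φ.edges.toFinset with hE
  have hEsub : ∀ φ : G.Walk x y, ↑(E φ) ⊆ G.edgeSet := by
    intro φ e he
    exact φ.edges_subset_edgeSet (by simpa [hE] using he)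
  set w : G.Walk x y → ℝ≥0∞ := fun φ => p'⁻¹ ^ (E φ).card with hw
  have hcylP : ∀ φ : G.Walk x y, P (cylEvent (E φ)) = p' ^ (E φ).card :=
    fun φ => hPcyl _ (hEsub φ)
  -- the second-moment measure ν
  set m : G.Walk x y → Measure (Set (Sym2 V)) :=
    fun φ => w φ • P.restrict (cylEvent (E φ)) with hm
  have hmmeas : Measurable m := walk_measurable m
  set ν : Measure (Set (Sym2 V)) := μ.bind m with hν
  have hνapp : ∀ A : Set (Set (Sym2 V)), MeasurableSet A →
      ν A = ∫⁻ φ, w φ * P (A ∩ cylEvent (E φ)) ∂μ := by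
    intro A hA
    rw [hν, Measure.bind_apply hA hmmeas.aemeasurable]
    refine lintegral_congr fun φ => ?_
    rw [hm]
    simp [Measure.restrict_apply hA]
  have hνuniv : ν Set.univ = 1 := by
    rw [hνapp _ MeasurableSet.univ]
    have h1 : ∀ φ : G.Walk x y, w φ * P (Set.univ ∩ cylEvent (E φ)) = 1 := by
      intro φ
      rw [Set.univ_inter, hcylP φ, hw]
      exact hcan _
    rw [lintegral_congr h1, lintegral_one, measure_univ]
  haveI : IsFiniteMeasure ν := ⟨by rw [hνuniv]; exact ENNReal.one_lt_top⟩
  have hac : ν ≪ P := by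
    refine Measure.AbsolutelyContinuous.mk fun A hA hA0 => ?_
    rw [hνapp A hA]
    have h0 : ∀ φ : G.Walk x y, w φ * P (A ∩ cylEvent (E φ)) = 0 := by
      intro φ
      rw [measure_inter_null_of_null_left _ hA0, mul_zero]
    rw [lintegral_congr h0, lintegral_zero]
  -- Radon–Nikodym derivative
  set Z : Set (Sym2 V) → ℝ≥0∞ := ν.rnDeriv P with hZdef
  have hZmeas : Measurable Z := Measure.measurable_rnDeriv ν P
  have hwd : P.withDensity Z = ν := Measure.withDensity_rnDeriv_eq ν P hac
  -- the second moment
  set M2 : ℝ≥0∞ := ∫⁻ φ, w φ * ν (cylEvent (E φ)) ∂μ with hM2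
  have hZ2 : ∫⁻ ω, Z ω ^ 2 ∂P = M2 := by
    have h1 : ∫⁻ ω, Z ω ^ 2 ∂P = ∫⁻ ω, Z ω ∂ν := by
      rw [← hwd, lintegral_withDensity_eq_lintegral_mul P hZmeas hZmeas]
      exact lintegral_congr fun ω => by rw [pow_two]; rfl
    rw [h1, hν, Measure.lintegral_bind hmmeas.aemeasurable hZmeas.aemeasurable]
    refine lintegral_congr fun φ => ?_
    rw [hm]
    simp only [lintegral_smul_measure]
    congr 1
    rw [← withDensity_apply Z (measurableSet_cylEvent (E φ)), hwd]
  -- pointwise identity for the second moment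
  have hpoint : ∀ φ ψ : G.Walk x y,
      w φ * (w ψ * P (cylEvent (E φ) ∩ cylEvent (E ψ))) = p'⁻¹ ^ sharedEdges φ ψ := by
    intro φ ψ
    have hcup : cylEvent (E φ) ∩ cylEvent (E ψ) = cylEvent (E φ ∪ E ψ) := by
      ext ω
      simp only [cylEvent, Set.mem_inter_iff, Set.mem_setOf_eq, Finset.mem_union]
      constructor
      · rintro ⟨h1, h2⟩ e (he | he); exacts [h1 e he, h2 e he]
      · intro h; exact ⟨fun e he => h e (Or.inl he), fun e he => h e (Or.inr he)⟩
    have hsub : ↑(E φ ∪ E ψ) ⊆ G.edgeSet := by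
      rw [Finset.coe_union]
      exact Set.union_subset (hEsub φ) (hEsub ψ)
    rw [hcup, show P (cylEvent (E φ ∪ E ψ)) = p' ^ (E φ ∪ E ψ).card from hPcyl _ hsub, hw]
    simp only
    have hshared : sharedEdges φ ψ = (E φ ∩ E ψ).card := rfl
    have hile : (E φ ∩ E ψ).card ≤ (E φ).card :=
      Finset.card_le_card Finset.inter_subset_left
    have hcard := Finset.card_union_add_card_inter (E φ) (E ψ)
    set a := (E φ).card
    set b := (E ψ).card
    set i := (E φ ∩ E ψ).card
    set k := a - i with hk
    have hak : a = k + i := by omega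
    have hu : (E φ ∪ E ψ).card = k + b := by omega
    rw [hshared, hu, hak]
    calc p'⁻¹ ^ (k + i) * (p'⁻¹ ^ b * p' ^ (k + b))
        = (p'⁻¹ ^ k * p' ^ k) * ((p'⁻¹ ^ b * p' ^ b) * p'⁻¹ ^ i) := by
          rw [pow_add, pow_add]; ring
      _ = p'⁻¹ ^ i := by rw [hcan, hcan, one_mul, one_mul]
  have hM2eq : M2 = ∫⁻ φ, ∫⁻ ψ, p'⁻¹ ^ sharedEdges φ ψ ∂μ ∂μ := by
    rw [hM2]
    refine lintegral_congr fun φ => ?_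
    rw [hνapp _ (measurableSet_cylEvent (E φ)), ← lintegral_const_mul _ (walk_measurable _)]
    refine lintegral_congr fun ψ => ?_
    exact hpoint φ ψ
  -- geometric bound on the second moment
  set r : ℝ≥0∞ := ENNReal.ofReal (θ / p) with hr
  set B : ℝ≥0∞ := ENNReal.ofReal c * (1 - r)⁻¹ with hB
  have hθp1 : θ / p < 1 := (div_lt_one hp0).mpr hp1
  have hr1 : r < 1 := ENNReal.ofReal_lt_one.mpr hθp1
  have h1r0 : (1 : ℝ≥0∞) - r ≠ 0 := (tsub_pos_of_lt hr1).ne'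
  have h1rt : (1 : ℝ≥0∞) - r ≠ ⊤ := (tsub_le_self.trans_lt ENNReal.one_lt_top).ne
  have hB0 : B ≠ 0 := by
    rw [hB]
    exact mul_ne_zero (ENNReal.ofReal_pos.mpr hc).ne' (ENNReal.inv_ne_zero.mpr h1rt)
  have hBt : B ≠ ⊤ := by
    rw [hB]
    exact ENNReal.mul_ne_top ENNReal.ofReal_ne_top (ENNReal.inv_ne_top.mpr h1r0)
  have hM2le : M2 ≤ B := by
    rw [hM2eq]
    have hexp : ∀ φ ψ : G.Walk x y, p'⁻¹ ^ sharedEdges φ ψ =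
        ∑' n : ℕ, Set.indicator {q : G.Walk x y × G.Walk x y | sharedEdges q.1 q.2 = n}
          (fun _ => p'⁻¹ ^ n) (φ, ψ) := by
      intro φ ψ
      rw [tsum_eq_single (sharedEdges φ ψ) ?_]
      · simp [Set.indicator]
      · intro n hn
        simp only [Set.indicator, Set.mem_setOf_eq]
        rw [if_neg (fun h => hn h.symm)]
    calc ∫⁻ φ, ∫⁻ ψ, p'⁻¹ ^ sharedEdges φ ψ ∂μ ∂μ
        = ∑' n : ℕ, ∫⁻ φ, ∫⁻ ψ,
            Set.indicator {q : G.Walk x y × G.Walk x y | sharedEdges q.1 q.2 = n}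
              (fun _ => p'⁻¹ ^ n) (φ, ψ) ∂μ ∂μ := by
          rw [← lintegral_tsum fun n => (walk_measurable _).aemeasurable]
          refine lintegral_congr fun φ => ?_
          rw [← lintegral_tsum fun n => (walk_measurable _).aemeasurable]
          exact lintegral_congr fun ψ => hexp φ ψ
      _ ≤ ∑' n : ℕ, ENNReal.ofReal c * r ^ n := by
          refine ENNReal.tsum_le_tsum fun n => ?_
          set S : Set (G.Walk x y × G.Walk x y) := {q | sharedEdges q.1 q.2 = n} with hS
          obtain ⟨U, hSU, hUm, hUeq⟩ := exists_measurable_superset (μ.prod μ) S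
          have hindle : ∀ q : G.Walk x y × G.Walk x y,
              Set.indicator S (fun _ => p'⁻¹ ^ n) q ≤
                Set.indicator U (fun _ => p'⁻¹ ^ n) q :=
            fun q => Set.indicator_le_indicator_of_subset hSU (fun _ => zero_le) q
          calc ∫⁻ φ, ∫⁻ ψ, Set.indicator S (fun _ => p'⁻¹ ^ n) (φ, ψ) ∂μ ∂μ
              ≤ ∫⁻ φ, ∫⁻ ψ, Set.indicator U (fun _ => p'⁻¹ ^ n) (φ, ψ) ∂μ ∂μ :=
                lintegral_mono fun φ => lintegral_mono fun ψ => hindle (φ, ψ)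
            _ = ∫⁻ φ, p'⁻¹ ^ n * μ (Prod.mk φ ⁻¹' U) ∂μ := by
                refine lintegral_congr fun φ => ?_
                have hslice : (fun ψ => Set.indicator U (fun _ => p'⁻¹ ^ n) (φ, ψ)) =
                    Set.indicator (Prod.mk φ ⁻¹' U) (fun _ => p'⁻¹ ^ n) := by
                  funext ψ
                  by_cases h : (φ, ψ) ∈ U <;>
                    simp [Set.indicator_apply, Set.mem_preimage, h]
                rw [hslice, lintegral_indicator_const (measurable_prodMk_left hUm)]
            _ = p'⁻¹ ^ n * (μ.prod μ) S := by
                rw [lintegral_const_mul _ (walk_measurable _), ← hUeq,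
                  Measure.prod_apply hUm]
            _ ≤ p'⁻¹ ^ n * ENNReal.ofReal (c * θ ^ n) := by
                exact mul_le_mul_right (hint n) _
            _ = ENNReal.ofReal c * r ^ n := by
                rw [ENNReal.ofReal_mul hc.le, ENNReal.ofReal_pow hθ0.le, hr,
                  ENNReal.ofReal_div_of_pos hp0, div_eq_mul_inv, mul_pow, ← hp']
                ring
      _ = B := by rw [ENNReal.tsum_mul_left, ENNReal.tsum_geometric, hB]
  -- reduce to a measurable superset of the connection event
  obtain ⟨A, hTA, hAm, hAeq⟩ := exists_measurable_superset P {ω | y ∈ cluster G ω x}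
  have hcylsub : ∀ φ : G.Walk x y, cylEvent (E φ) ⊆ A := by
    intro φ ω hω
    apply hTA
    refine SimpleGraph.Walk.reachable (φ.transfer (percGraph G ω) ?_)
    intro e he
    have heω : e ∈ ω := hω e (by simpa [hE] using he)
    have heG : e ∈ G.edgeSet := φ.edges_subset_edgeSet he
    clear he
    induction e with
    | _ a b =>
      rw [SimpleGraph.mem_edgeSet] at heG ⊢
      exact (show G.Adj a b ∧ s(a, b) ∈ ω from ⟨heG, heω⟩)
  have hνA : ν A = 1 := by
    have hcompl : ν Aᶜ = 0 := by
      rw [hνapp _ hAm.compl]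
      have h0 : ∀ φ : G.Walk x y, w φ * P (Aᶜ ∩ cylEvent (E φ)) = 0 := by
        intro φ
        have he : Aᶜ ∩ cylEvent (E φ) = ∅ := by
          rw [Set.eq_empty_iff_forall_notMem]
          rintro ω ⟨h1, h2⟩
          exact h1 (hcylsub φ h2)
        rw [he, measure_empty, mul_zero]
      rw [lintegral_congr h0, lintegral_zero]
    have h := measure_add_measure_compl (μ := ν) hAm
    rw [hcompl, add_zero, hνuniv] at h
    exact h
  -- the Cauchy–Schwarz chain
  have hchain : (2 : ℝ≥0∞) ≤ B * P A + 1 := by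
    calc (2 : ℝ≥0∞) = 2 * ν A := by rw [hνA, mul_one]
      _ = 2 * ∫⁻ ω in A, Z ω ∂P := by rw [← withDensity_apply Z hAm, hwd]
      _ = ∫⁻ ω in A, 2 * Z ω ∂P := (lintegral_const_mul 2 hZmeas).symm
      _ ≤ ∫⁻ ω in A, (B + Z ω ^ 2 / B) ∂P :=
          lintegral_mono fun ω => ennreal_two_mul_le (Z ω) B hB0 hBt
      _ = B * P A + (∫⁻ ω in A, Z ω ^ 2 ∂P) / B := by
          rw [lintegral_add_left measurable_const, setLIntegral_const]
          congr 1
          simp only [div_eq_mul_inv]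
          rw [lintegral_mul_const _ (hZmeas.pow_const 2)]
      _ ≤ B * P A + 1 := by
          refine add_le_add_right ?_ _
          have hle : (∫⁻ ω in A, Z ω ^ 2 ∂P) ≤ B :=
            (setLIntegral_le_lintegral A _).trans (le_of_eq_of_le hZ2 hM2le)
          calc (∫⁻ ω in A, Z ω ^ 2 ∂P) / B ≤ B / B := ENNReal.div_le_div_right hle B
            _ = 1 := ENNReal.div_self hB0 hBt
  have h1le : (1 : ℝ≥0∞) ≤ B * P A := by
    have h2 : (1 : ℝ≥0∞) + 1 ≤ B * P A + 1 := by
      calc (1 : ℝ≥0∞) + 1 = 2 := by norm_num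
        _ ≤ B * P A + 1 := hchain
    exact (ENNReal.add_le_add_iff_right ENNReal.one_ne_top).mp h2
  have hfinal : B⁻¹ ≤ P A := by
    calc B⁻¹ = B⁻¹ * 1 := (mul_one _).symm
      _ ≤ B⁻¹ * (B * P A) := mul_le_mul_right h1le _
      _ = (B⁻¹ * B) * P A := (mul_assoc _ _ _).symm
      _ = P A := by rw [ENNReal.inv_mul_cancel hB0 hBt, one_mul]
  rw [hAeq] at hfinal
  refine le_trans (le_of_eq ?_) hfinal
  rw [hB, ENNReal.mul_inv (Or.inr (ENNReal.inv_ne_top.mpr h1r0))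
    (Or.inl ENNReal.ofReal_ne_top), inv_inv, ENNReal.ofReal_mul (inv_nonneg.mpr hc.le),
    ENNReal.ofReal_inv_of_pos hc, ENNReal.ofReal_sub 1 (div_nonneg hθ0.le hp0.le),
    ENNReal.ofReal_one, hr]
end
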